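/- Let L be a finite-dimensional minimal nonnilpotent left Leibniz algebra that is a Lie algebra, with A the ideal as in Towers' decomposition (A/N the unique minimal ideal of L/N for N the core of a self-normalizing maximal subalgebra). Then A^3 = 0. -/

import Mathlib

set_option linter.unnecessarySimpa false

/-- The left Leibniz identity for a bilinear bracket `B`. -/
def LeibnizId {F L : Type*} [Field F] [AddCommGroup L] [Module F L]
    (B : L →ₗ[F] L →ₗ[F] L) : Prop :=
  ∀ a b c : L, B a (B b c) = B (B a b) c + B b (B a c)

/-- The span of all brackets `[s,t]` with `s ∈ S`, `t ∈ T`. -/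
def lbrk {F L : Type*} [Field F] [AddCommGroup L] [Module F L]
    (B : L →ₗ[F] L →ₗ[F] L) (S T : Submodule F L) : Submodule F L :=
  Submodule.span F {z : L | ∃ s ∈ S, ∃ t ∈ T, z = B s t}

/-- A subspace closed under the bracket. -/
def IsLeibSubalg {F L : Type*} [Field F] [AddCommGroup L] [Module F L]
    (B : L →ₗ[F] L →ₗ[F] L) (S : Submodule F L) : Prop :=
  ∀ x ∈ S, ∀ y ∈ S, B x y ∈ S

/-- A (two-sided) ideal. -/
def IsLeibIdeal {F L : Type*} [Field F] [AddCommGroup L] [Module F L]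
    (B : L →ₗ[F] L →ₗ[F] L) (S : Submodule F L) : Prop :=
  (∀ x : L, ∀ y ∈ S, B x y ∈ S) ∧ (∀ y ∈ S, ∀ x : L, B y x ∈ S)

/-- Lower central series: `L^1 = L`, `L^{n+1} = [L, L^n]`. -/
def leibLCS {F L : Type*} [Field F] [AddCommGroup L] [Module F L]
    (B : L →ₗ[F] L →ₗ[F] L) : ℕ → Submodule F L
  | 0 => ⊤
  | n + 1 => lbrk B ⊤ (leibLCS B n)

def LeibIsNilpotent {F L : Type*} [Field F] [AddCommGroup L] [Module F L]
    (B : L →ₗ[F] L →ₗ[F] L) : Prop :=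
  ∃ n, leibLCS B n = ⊥

/-- Lower central series of a subalgebra `S`. -/
def leibLCSIn {F L : Type*} [Field F] [AddCommGroup L] [Module F L]
    (B : L →ₗ[F] L →ₗ[F] L) (S : Submodule F L) : ℕ → Submodule F L
  | 0 => S
  | n + 1 => lbrk B S (leibLCSIn B S n)

/-- A subalgebra `S` is nilpotent (as an algebra in its own right). -/
def LeibSubalgNilpotent {F L : Type*} [Field F] [AddCommGroup L] [Module F L]
    (B : L →ₗ[F] L →ₗ[F] L) (S : Submodule F L) : Prop :=
  ∃ n, leibLCSIn B S n = ⊥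

/-- Derived series. -/
def leibDerived {F L : Type*} [Field F] [AddCommGroup L] [Module F L]
    (B : L →ₗ[F] L →ₗ[F] L) : ℕ → Submodule F L
  | 0 => ⊤
  | n + 1 => lbrk B (leibDerived B n) (leibDerived B n)

def LeibIsSolvable {F L : Type*} [Field F] [AddCommGroup L] [Module F L]
    (B : L →ₗ[F] L →ₗ[F] L) : Prop :=
  ∃ n, leibDerived B n = ⊥

/-- The normalizer of a subspace `S`: elements `x` with `[x,S] ⊆ S` and `[S,x] ⊆ S`. -/
def leibNormalizer {F L : Type*} [Field F] [AddCommGroup L] [Module F L]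
    (B : L →ₗ[F] L →ₗ[F] L) (S : Submodule F L) : Submodule F L where
  carrier := {x : L | ∀ m ∈ S, B x m ∈ S ∧ B m x ∈ S}
  add_mem' := by
    intro x y hx hy m hm
    constructor
    · have := S.add_mem (hx m hm).1 (hy m hm).1
      simpa [map_add] using this
    · have := S.add_mem (hx m hm).2 (hy m hm).2
      simpa [map_add] using this
  zero_mem' := by
    intro m hm
    constructor
    · simpa [map_zero] using S.zero_mem
    · simpa [map_zero] using S.zero_mem
  smul_mem' := by
    intro c x hx m hm
    constructor
    · have := S.smul_mem c (hx m hm).1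
      simpa [map_smul] using this
    · have := S.smul_mem c (hx m hm).2
      simpa [map_smul] using this

/-- `Leib(L)`: the span of all squares. -/
def leibLeib {F L : Type*} [Field F] [AddCommGroup L] [Module F L]
    (B : L →ₗ[F] L →ₗ[F] L) : Submodule F L :=
  Submodule.span F {z : L | ∃ y : L, z = B y y}

/-- A maximal (proper) subalgebra. -/
def IsMaxSubalg {F L : Type*} [Field F] [AddCommGroup L] [Module F L]
    (B : L →ₗ[F] L →ₗ[F] L) (S : Submodule F L) : Prop :=
  IsLeibSubalg B S ∧ S ≠ ⊤ ∧ ∀ T : Submodule F L, IsLeibSubalg B T → S < T → T = ⊤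

/-- `N` is the core of `M`: the largest ideal of `L` contained in `M`. -/
def IsCore {F L : Type*} [Field F] [AddCommGroup L] [Module F L]
    (B : L →ₗ[F] L →ₗ[F] L) (M N : Submodule F L) : Prop :=
  IsLeibIdeal B N ∧ N ≤ M ∧ ∀ C : Submodule F L, IsLeibIdeal B C → C ≤ M → C ≤ N

/-- Minimal nonnilpotent: nonnilpotent, solvable, all proper subalgebras nilpotent. -/
def MinNonnilpotent {F L : Type*} [Field F] [AddCommGroup L] [Module F L]
    (B : L →ₗ[F] L →ₗ[F] L) : Prop :=
  ¬ LeibIsNilpotent B ∧ LeibIsSolvable B ∧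
    ∀ S : Submodule F L, IsLeibSubalg B S → S ≠ ⊤ → LeibSubalgNilpotent B S

/-- Cyclic: generated as an algebra by a single element. -/
def LeibCyclic {F L : Type*} [Field F] [AddCommGroup L] [Module F L]
    (B : L →ₗ[F] L →ₗ[F] L) : Prop :=
  ∃ z : L, ∀ S : Submodule F L, IsLeibSubalg B S → z ∈ S → S = ⊤


section AuxLemmas

variable {F L : Type*} [Field F] [AddCommGroup L] [Module F L]

theorem mem_lbrk (B : L →ₗ[F] L →ₗ[F] L) {S T : Submodule F L} {s t : L}
    (hs : s ∈ S) (ht : t ∈ T) : B s t ∈ lbrk B S T :=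
  Submodule.subset_span ⟨s, hs, t, ht, rfl⟩

theorem lbrk_le (B : L →ₗ[F] L →ₗ[F] L) {S T U : Submodule F L}
    (h : ∀ s ∈ S, ∀ t ∈ T, B s t ∈ U) : lbrk B S T ≤ U := by
  rw [lbrk, Submodule.span_le]
  rintro z ⟨s, hs, t, ht, rfl⟩
  exact h s hs t ht

theorem lbrk_mono (B : L →ₗ[F] L →ₗ[F] L) {S S' T T' : Submodule F L}
    (h1 : S ≤ S') (h2 : T ≤ T') : lbrk B S T ≤ lbrk B S' T' :=
  lbrk_le B fun s hs t ht => mem_lbrk B (h1 hs) (h2 ht)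

theorem forall_lbrk (B : L →ₗ[F] L →ₗ[F] L) {S T U : Submodule F L} {z : L}
    (h : ∀ s ∈ S, ∀ t ∈ T, B z (B s t) ∈ U) : ∀ w ∈ lbrk B S T, B z w ∈ U := by
  intro w hw
  have h2 : lbrk B S T ≤ U.comap (B z) := lbrk_le B fun s hs t ht => h s hs t ht
  exact h2 hw

theorem leib_skew (B : L →ₗ[F] L →ₗ[F] L) (hLie : ∀ y : L, B y y = 0) (a b : L) :
    B a b = - B b a := by
  have h := hLie (a + b)
  simp only [map_add, LinearMap.add_apply, hLie a, hLie b, zero_add, add_zero] at h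
  exact eq_neg_of_add_eq_zero_right h

theorem ideal_of_left (B : L →ₗ[F] L →ₗ[F] L) (hLie : ∀ y : L, B y y = 0)
    (S : Submodule F L) (h : ∀ x : L, ∀ y ∈ S, B x y ∈ S) : IsLeibIdeal B S :=
  ⟨h, fun y hy x => by rw [leib_skew B hLie y x]; exact S.neg_mem (h x y hy)⟩

end AuxLemmas

set_option maxHeartbeats 1000000 in
/-- if in addition `L` is a Lie algebra (all squares vanish), then `A³ = 0`. -/
theorem stmt8 {F L : Type*} [Field F] [AddCommGroup L] [Module F L] [FiniteDimensional F L]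
    (B : L →ₗ[F] L →ₗ[F] L) (hB : LeibnizId B) (hLie : ∀ y : L, B y y = 0)
    (hmin : MinNonnilpotent B)
    (M N : Submodule F L) (hM : IsMaxSubalg B M) (hself : leibNormalizer B M = M)
    (hN : IsCore B M N)
    (A : Submodule F L) (hA : IsLeibIdeal B A ∧ N < A ∧
      ∀ C : Submodule F L, IsLeibIdeal B C → N < C → C ≤ A → C = A) :
    lbrk B A (lbrk B A A) = ⊥ := by
  obtain ⟨hAid, hNA, hAmin⟩ := hA
  obtain ⟨hMsub, hMne, hMmax⟩ := hM
  obtain ⟨hNid, hNM, hNcore⟩ := hN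
  obtain ⟨_hLnn, hLsolv, hproper⟩ := hmin
  have hsk := leib_skew B hLie
  have hNleA : N ≤ A := le_of_lt hNA
  -- M cannot be "left-idealized"
  have hMnotid : ¬ (∀ z : L, ∀ m ∈ M, B z m ∈ M) := by
    intro h
    have htop : leibNormalizer B M = ⊤ := by
      rw [eq_top_iff]
      intro z _
      intro m hm
      exact ⟨h z m hm, by rw [hsk m z]; exact M.neg_mem (h z m hm)⟩
    exact hMne (by rw [← hself, htop])
  -- A² is a left-closed subspace
  have hA2left : ∀ x : L, ∀ y ∈ lbrk B A A, B x y ∈ lbrk B A A := by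
    intro x y hy
    refine forall_lbrk B ?_ y hy
    intro a ha b hb
    rw [hB x a b]
    exact add_mem (mem_lbrk B (hAid.1 x a ha) hb) (mem_lbrk B ha (hAid.1 x b hb))
  have hAA_A : lbrk B A A ≤ A := lbrk_le B fun s hs t ht => hAid.1 s t ht
  -- Step 1 : A² ≤ N
  have hA2N : lbrk B A A ≤ N := by
    by_contra hcon
    have hCleft : ∀ x : L, ∀ y ∈ N ⊔ lbrk B A A, B x y ∈ N ⊔ lbrk B A A := by
      intro x y hy
      rcases Submodule.mem_sup.1 hy with ⟨n, hn, q, hq, rfl⟩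
      rw [map_add]
      exact add_mem (Submodule.mem_sup_left (hNid.1 x n hn))
        (Submodule.mem_sup_right (hA2left x q hq))
    have hCid : IsLeibIdeal B (N ⊔ lbrk B A A) := ideal_of_left B hLie _ hCleft
    have hNC : N < N ⊔ lbrk B A A := by
      refine lt_of_le_of_ne le_sup_left fun h => hcon ?_
      rw [h]; exact le_sup_right
    have hCA' : N ⊔ lbrk B A A = A := hAmin _ hCid hNC (sup_le hNleA hAA_A)
    obtain ⟨m, hm⟩ := hLsolv
    have hder : ∀ k, A ≤ N ⊔ leibDerived B k := by
      intro k; induction k with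
      | zero =>
        have : leibDerived B 0 = (⊤ : Submodule F L) := rfl
        rw [this, sup_top_eq]; exact le_top
      | succ k ih =>
        have h2 : lbrk B A A ≤ N ⊔ leibDerived B (k+1) := by
          refine le_trans (lbrk_mono B ih ih) (lbrk_le B ?_)
          intro s hs t ht
          rcases Submodule.mem_sup.1 hs with ⟨n, hn, d, hd, rfl⟩
          rcases Submodule.mem_sup.1 ht with ⟨n', hn', d', hd', rfl⟩
          have h1 : B n n' ∈ N := hNid.1 n n' hn'
          have h2 : B n d' ∈ N := hNid.2 n hn d'
          have h3 : B d n' ∈ N := hNid.1 d n' hn'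
          have h4 : B d d' ∈ leibDerived B (k+1) := by
            have : leibDerived B (k+1) = lbrk B (leibDerived B k) (leibDerived B k) := rfl
            rw [this]; exact mem_lbrk B hd hd'
          have heq : B (n + d) (n' + d') = ((B n n' + B n d') + B d n') + B d d' := by
            simp only [map_add, LinearMap.add_apply]; abel
          rw [heq]
          exact add_mem (Submodule.mem_sup_left (add_mem (add_mem h1 h2) h3))
            (Submodule.mem_sup_right h4)
        rw [← hCA']
        exact sup_le le_sup_left h2
    have hfin : A ≤ N := by have := hder m; rwa [hm, sup_bot_eq] at this
    exact hNA.not_ge hfin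
  -- A ≠ ⊤
  have hAtop : A ≠ ⊤ := by
    intro htop
    apply hMnotid
    intro z m hm
    have hz : z ∈ A := htop ▸ Submodule.mem_top
    have hm' : m ∈ A := htop ▸ Submodule.mem_top
    exact hNM (hA2N (mem_lbrk B hz hm'))
  -- M ⊔ A = ⊤
  have hMAsub : IsLeibSubalg B (M ⊔ A) := by
    intro x hx y hy
    rcases Submodule.mem_sup.1 hx with ⟨m, hm, a, ha, rfl⟩
    rcases Submodule.mem_sup.1 hy with ⟨m', hm', a', ha', rfl⟩
    have heq : B (m+a) (m'+a') = B m m' + (B m a' + (B a m' + B a a')) := by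
      simp only [map_add, LinearMap.add_apply]; abel
    rw [heq]
    exact add_mem (Submodule.mem_sup_left (hMsub m hm m' hm'))
      (Submodule.mem_sup_right (add_mem (hAid.1 m a' ha')
        (add_mem (hAid.2 a ha m') (hAid.1 a a' ha'))))
  have hMAtop : M ⊔ A = ⊤ := by
    apply hMmax _ hMAsub
    refine lt_of_le_of_ne le_sup_left fun h => ?_
    have hAM : A ≤ M := by rw [h]; exact le_sup_right
    exact hNA.not_ge (hNcore A hAid hAM)
  have hMAA : lbrk B M A ≤ A := lbrk_le B fun s _ t ht => hAid.1 s t ht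
  -- A = N ⊔ [M,A]
  have hD1 : A = N ⊔ lbrk B M A := by
    by_cases hle : lbrk B M A ≤ N
    · exfalso; apply hMnotid
      intro z m hm
      rcases Submodule.mem_sup.1 (hMAtop ▸ Submodule.mem_top : z ∈ M ⊔ A)
        with ⟨m', hm', a', ha', rfl⟩
      have h2 : B a' m ∈ M := by
        rw [hsk a' m]; exact M.neg_mem (hNM (hle (mem_lbrk B hm ha')))
      have heq : B (m' + a') m = B m' m + B a' m := by
        simp only [map_add, LinearMap.add_apply]
      rw [heq]; exact add_mem (hMsub m' hm' m hm) h2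
    · have hD1left : ∀ x : L, ∀ y ∈ N ⊔ lbrk B M A, B x y ∈ N ⊔ lbrk B M A := by
        intro x y hy
        rcases Submodule.mem_sup.1 hy with ⟨n, hn, w, hw, rfl⟩
        rw [map_add]
        refine add_mem (Submodule.mem_sup_left (hNid.1 x n hn)) ?_
        rcases Submodule.mem_sup.1 (hMAtop ▸ Submodule.mem_top : x ∈ M ⊔ A)
          with ⟨m', hm', a', ha', rfl⟩
        refine forall_lbrk B ?_ w hw
        intro m hm a ha
        have e : B (m'+a') (B m a) = B m' (B m a) + B a' (B m a) := by
          simp only [map_add, LinearMap.add_apply]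
        rw [e]
        have t1 : B m' (B m a) ∈ N ⊔ lbrk B M A := by
          rw [hB m' m a]
          exact add_mem (Submodule.mem_sup_right (mem_lbrk B (hMsub m' hm' m hm) ha))
            (Submodule.mem_sup_right (mem_lbrk B hm (hAid.1 m' a ha)))
        have t2 : B a' (B m a) ∈ N ⊔ lbrk B M A := by
          rw [hB a' m a]
          exact add_mem (Submodule.mem_sup_left (hA2N (mem_lbrk B (hAid.2 a' ha' m) ha)))
            (Submodule.mem_sup_right (mem_lbrk B hm (hAid.1 a' a ha)))
        exact add_mem t1 t2
      have hD1id : IsLeibIdeal B (N ⊔ lbrk B M A) := ideal_of_left B hLie _ hD1left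
      have hND1 : N < N ⊔ lbrk B M A := by
        refine lt_of_le_of_ne le_sup_left fun h => hle ?_
        rw [h]; exact le_sup_right
      exact (hAmin _ hD1id hND1 (sup_le hNleA hMAA)).symm
  -- the chain U k = [M,[M,...,[M,A]]]
  set f : Submodule F L → Submodule F L := fun S => lbrk B M S with hf
  have fmono : ∀ {S T : Submodule F L}, S ≤ T → f S ≤ f T := fun h => lbrk_mono B le_rfl h
  have fitmono : ∀ (n : ℕ) {S T : Submodule F L}, S ≤ T → f^[n] S ≤ f^[n] T := by
    intro n; induction n with
    | zero => intro S T h; simpa using h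
    | succ n ih =>
      intro S T h
      rw [Function.iterate_succ_apply', Function.iterate_succ_apply']
      exact fmono (ih h)
  have fbot : f ⊥ = ⊥ := by
    refine le_bot_iff.1 (lbrk_le B ?_)
    rintro s _ t ht
    rw [(Submodule.mem_bot F).1 ht, map_zero]
    exact Submodule.zero_mem ⊥
  have fitbot : ∀ n : ℕ, f^[n] (⊥ : Submodule F L) = ⊥ := by
    intro n; induction n with
    | zero => simp
    | succ n ih => rw [Function.iterate_succ_apply', ih, fbot]
  have fsup : ∀ (S T : Submodule F L), f (S ⊔ T) ≤ f S ⊔ f T := by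
    intro S T
    refine lbrk_le B ?_
    intro s hs t ht
    rcases Submodule.mem_sup.1 ht with ⟨t1, h1, t2, h2, rfl⟩
    rw [map_add]
    exact add_mem (Submodule.mem_sup_left (mem_lbrk B hs h1))
      (Submodule.mem_sup_right (mem_lbrk B hs h2))
  have fitsup : ∀ (n : ℕ) (S T : Submodule F L), f^[n] (S ⊔ T) ≤ f^[n] S ⊔ f^[n] T := by
    intro n; induction n with
    | zero => intro S T; simp
    | succ n ih =>
      intro S T
      rw [Function.iterate_succ_apply', Function.iterate_succ_apply',
        Function.iterate_succ_apply']
      exact le_trans (fmono (ih S T)) (fsup _ _)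
  have hUle : ∀ k, f^[k] A ≤ A := by
    intro k; induction k with
    | zero => simp
    | succ k ih =>
      rw [Function.iterate_succ_apply']
      exact le_trans (fmono ih) hMAA
  have hUmono : ∀ k, f^[k+1] A ≤ f^[k] A := by
    intro k
    rw [Function.iterate_succ_apply]
    exact fitmono k hMAA
  have hfNN : f N ≤ N := lbrk_le B fun s _ t ht => hNid.1 s t ht
  have hMNle : ∀ i, f^[i] N ≤ N := by
    intro i; induction i with
    | zero => simp
    | succ i ih =>
      rw [Function.iterate_succ_apply']
      exact le_trans (fmono ih) hfNN
  have hAU : ∀ k, A = N ⊔ f^[k] A := by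
    intro k; induction k with
    | zero => simpa using (sup_eq_right.2 hNleA).symm
    | succ k ih =>
      rw [Function.iterate_succ_apply']
      apply le_antisymm
      · conv_lhs => rw [hD1]
        refine sup_le le_sup_left ?_
        have h2 : lbrk B M A ≤ f (N ⊔ f^[k] A) := lbrk_mono B le_rfl (le_of_eq ih)
        exact le_trans h2 (le_trans (fsup _ _)
          (sup_le (le_trans hfNN le_sup_left) le_sup_right))
      · have h3 := hUle (k+1)
        rw [Function.iterate_succ_apply'] at h3
        exact sup_le hNleA h3
  -- nilpotency of M kills iterated brackets of N
  obtain ⟨m0, hm0⟩ := hproper M hMsub hMne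
  have hlcsM : ∀ j, f^[j] N ≤ leibLCSIn B M j := by
    intro j; induction j with
    | zero => exact hNM
    | succ j ih =>
      rw [Function.iterate_succ_apply']
      have hdef : leibLCSIn B M (j+1) = lbrk B M (leibLCSIn B M j) := rfl
      rw [hdef]
      exact lbrk_mono B le_rfl ih
  have hMNbot : ∀ i, m0 ≤ i → f^[i] N = ⊥ := by
    intro i hi
    have h1 : f^[m0] N = ⊥ := le_bot_iff.1 (hm0 ▸ hlcsM m0)
    have h2 : f^[i] N = f^[i - m0] (f^[m0] N) := by
      rw [← Function.iterate_add_apply]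
      congr 1
      omega
    rw [h2, h1, fitbot]
  -- main combinatorial swap lemma
  have hMAIN : ∀ (j i t : ℕ), 2 * m0 ≤ i + j + t →
      f^[t] (lbrk B (f^[i] N) (f^[j] A)) ≤ ⊥ := by
    intro j
    induction j with
    | zero =>
      intro i t hit
      simp only [Function.iterate_zero, id_eq]
      rcases le_or_gt m0 i with hi | hi
      · rw [hMNbot i hi]
        have hb : lbrk B (⊥ : Submodule F L) A ≤ ⊥ := by
          refine lbrk_le B ?_
          rintro s hs t' _
          rw [(Submodule.mem_bot F).1 hs]
          simp
        exact le_trans (fitmono t hb) (le_of_eq (fitbot t))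
      · have ht : m0 ≤ t := by omega
        have h1 : lbrk B (f^[i] N) A ≤ N :=
          lbrk_le B fun s hs a _ => hNid.2 s (hMNle i hs) a
        have h2 := fitmono t h1
        rw [hMNbot t ht] at h2
        exact h2
    | succ j ih =>
      intro i t hit
      have hsplit : lbrk B (f^[i] N) (f^[j+1] A) ≤
          lbrk B (f^[i+1] N) (f^[j] A) ⊔ lbrk B M (lbrk B (f^[i] N) (f^[j] A)) := by
        rw [Function.iterate_succ_apply']
        refine lbrk_le B ?_
        intro n hn w hw
        refine forall_lbrk B ?_ w hw
        intro m hm u hu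
        rw [hB n m u]
        refine add_mem (Submodule.mem_sup_left ?_) (Submodule.mem_sup_right ?_)
        · have hnm : B n m ∈ f^[i+1] N := by
            rw [Function.iterate_succ_apply']
            show B n m ∈ lbrk B M (f^[i] N)
            rw [hsk n m]
            exact Submodule.neg_mem _ (mem_lbrk B hm hn)
          exact mem_lbrk B hnm hu
        · exact mem_lbrk B hm (mem_lbrk B hn hu)
      have h1 := ih (i+1) t (by omega)
      have h2 := ih i (t+1) (by omega)
      refine le_trans (fitmono t hsplit) (le_trans (fitsup t _ _) (sup_le h1 ?_))
      have he : f^[t] (lbrk B M (lbrk B (f^[i] N) (f^[j] A)))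
          = f^[t+1] (lbrk B (f^[i] N) (f^[j] A)) := by
        rw [Function.iterate_succ_apply]
      rw [he]
      exact h2
  -- A1 and its properties
  have hNA1 : ∀ n ∈ N, ∀ u ∈ f^[2*m0] A, B n u = 0 := by
    have h := hMAIN (2*m0) 0 0 (by omega)
    simp only [Function.iterate_zero, id_eq] at h
    intro n hn u hu
    exact (Submodule.mem_bot F).1 (h (mem_lbrk B hn hu))
  have hA1N : ∀ u ∈ f^[2*m0] A, ∀ n ∈ N, B u n = 0 := fun u hu n hn => by
    rw [hsk u n, hNA1 n hn u hu, neg_zero]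
  have hA1A : f^[2*m0] A ≤ A := hUle (2*m0)
  have hMA1p : ∀ m ∈ M, ∀ u ∈ f^[2*m0] A, B m u ∈ f^[2*m0] A := by
    intro m hm u hu
    have h1 : lbrk B M (f^[2*m0] A) ≤ f^[2*m0] A := by
      have h2 := hUmono (2*m0)
      rw [Function.iterate_succ_apply'] at h2
      exact h2
    exact h1 (mem_lbrk B hm hu)
  have hAeq : A = N ⊔ f^[2*m0] A := hAU (2*m0)
  -- P = [A1, A1]
  have hPN : lbrk B (f^[2*m0] A) (f^[2*m0] A) ≤ N := le_trans (lbrk_mono B hA1A hA1A) hA2N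
  have hNP : ∀ n ∈ N, ∀ p ∈ lbrk B (f^[2*m0] A) (f^[2*m0] A), B n p = 0 := by
    intro n hn p hp
    have h1 : ∀ w ∈ lbrk B (f^[2*m0] A) (f^[2*m0] A), B n w ∈ (⊥ : Submodule F L) := by
      refine forall_lbrk B ?_
      intro u hu v hv
      rw [hB n u v, hNA1 n hn u hu, hNA1 n hn v hv, map_zero]
      simp
    exact (Submodule.mem_bot F).1 (h1 p hp)
  have hMPp : ∀ m ∈ M, ∀ p ∈ lbrk B (f^[2*m0] A) (f^[2*m0] A),
      B m p ∈ lbrk B (f^[2*m0] A) (f^[2*m0] A) := by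
    intro m hm p hp
    refine forall_lbrk B ?_ p hp
    intro u hu v hv
    rw [hB m u v]
    exact add_mem (mem_lbrk B (hMA1p m hm u hu) hv) (mem_lbrk B hu (hMA1p m hm v hv))
  have hCA : f^[2*m0] A ⊔ lbrk B (f^[2*m0] A) (f^[2*m0] A) ≤ A :=
    sup_le hA1A (le_trans hPN hNleA)
  by_cases hex : ∃ x ∈ M,
      Submodule.span F {x} ⊔ (f^[2*m0] A ⊔ lbrk B (f^[2*m0] A) (f^[2*m0] A)) = ⊤
  · -- Branch 1 : some Sx = ⊤ ; then N ≤ A1 ⊔ P and we win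
    obtain ⟨x, hxM, hxtop⟩ := hex
    have hNC : ∀ n ∈ N, n ∈ f^[2*m0] A ⊔ lbrk B (f^[2*m0] A) (f^[2*m0] A) := by
      intro n hn
      have hmem : n ∈ Submodule.span F {x} ⊔
          (f^[2*m0] A ⊔ lbrk B (f^[2*m0] A) (f^[2*m0] A)) := hxtop ▸ Submodule.mem_top
      rcases Submodule.mem_sup.1 hmem with ⟨y, hy, w, hw, rfl⟩
      rcases Submodule.mem_span_singleton.1 hy with ⟨c, rfl⟩
      by_cases hc : c = 0
      · simpa [hc] using hw
      · exfalso
        have hxA : x ∈ A := by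
          have h2 : w ∈ A := hCA hw
          have h3 : c • x ∈ A := by
            have h4 := A.sub_mem (hNleA hn) h2
            simpa using h4
          have h5 := A.smul_mem c⁻¹ h3
          rwa [smul_smul, inv_mul_cancel₀ hc, one_smul] at h5
        have htople : (⊤ : Submodule F L) ≤ A := by
          rw [← hxtop]
          exact sup_le ((Submodule.span_singleton_le_iff_mem x A).2 hxA) hCA
        exact hAtop (top_le_iff.1 htople)
    have hAN0 : ∀ a ∈ A, ∀ n ∈ N, B a n = 0 := by
      intro a ha n hn
      have ha' : a ∈ N ⊔ f^[2*m0] A := by rw [← hAeq]; exact ha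
      rcases Submodule.mem_sup.1 ha' with ⟨n', hn', u, hu, rfl⟩
      have h1 : B n' n = 0 := by
        rcases Submodule.mem_sup.1 (hNC n hn) with ⟨u', hu', p, hp, rfl⟩
        rw [map_add, hNA1 n' hn' u' hu', hNP n' hn' p hp, add_zero]
      have h2 : B u n = 0 := hA1N u hu n hn
      rw [map_add, LinearMap.add_apply, h1, h2, add_zero]
    refine le_bot_iff.1 (lbrk_le B ?_)
    intro s hs w hw
    rw [hAN0 s hs w (hA2N hw)]
    exact Submodule.zero_mem ⊥
  · -- Branch 2 : all Sx proper, Engel gives a contradiction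
    push_neg at hex
    -- every x in M acts nilpotently on A1
    have hTx : ∀ x ∈ M, ∃ k : ℕ, ∀ u ∈ f^[2*m0] A, (fun a => B x a)^[k] u = 0 := by
      intro x hxM
      have hSxsub : IsLeibSubalg B (Submodule.span F {x} ⊔
          (f^[2*m0] A ⊔ lbrk B (f^[2*m0] A) (f^[2*m0] A))) := by
        intro y hy z hz
        -- first show the three generators map z into Sx, then use linearity in y
        have hxz : ∀ z' ∈ Submodule.span F {x} ⊔
            (f^[2*m0] A ⊔ lbrk B (f^[2*m0] A) (f^[2*m0] A)), B x z' ∈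
            Submodule.span F {x} ⊔
            (f^[2*m0] A ⊔ lbrk B (f^[2*m0] A) (f^[2*m0] A)) := by
          intro z' hz'
          rcases Submodule.mem_sup.1 hz' with ⟨y1, hy1, w, hw, rfl⟩
          rcases Submodule.mem_span_singleton.1 hy1 with ⟨c, rfl⟩
          rcases Submodule.mem_sup.1 hw with ⟨u, hu, p, hp, rfl⟩
          have e : B x (c • x + (u + p)) = c • B x x + (B x u + B x p) := by
            simp only [map_add, map_smul]
          rw [e, hLie x, smul_zero, zero_add]
          exact Submodule.mem_sup_right (add_mem (Submodule.mem_sup_left (hMA1p x hxM u hu))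
            (Submodule.mem_sup_right (hMPp x hxM p hp)))
        have huz : ∀ u ∈ f^[2*m0] A, ∀ z' ∈ Submodule.span F {x} ⊔
            (f^[2*m0] A ⊔ lbrk B (f^[2*m0] A) (f^[2*m0] A)), B u z' ∈
            Submodule.span F {x} ⊔
            (f^[2*m0] A ⊔ lbrk B (f^[2*m0] A) (f^[2*m0] A)) := by
          intro u hu z' hz'
          rcases Submodule.mem_sup.1 hz' with ⟨y1, hy1, w, hw, rfl⟩
          rcases Submodule.mem_span_singleton.1 hy1 with ⟨c, rfl⟩
          rcases Submodule.mem_sup.1 hw with ⟨u', hu', p', hp', rfl⟩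
          have e : B u (c • x + (u' + p')) = c • B u x + (B u u' + B u p') := by
            simp only [map_add, map_smul]
          rw [e]
          have h1 : B u x ∈ f^[2*m0] A := by
            rw [hsk u x]
            exact Submodule.neg_mem _ (hMA1p x hxM u hu)
          have h2 : B u u' ∈ lbrk B (f^[2*m0] A) (f^[2*m0] A) := mem_lbrk B hu hu'
          have h3 : B u p' = 0 := hA1N u hu _ (hPN hp')
          rw [h3, add_zero]
          exact add_mem (Submodule.mem_sup_right (Submodule.mem_sup_left
            (Submodule.smul_mem _ c h1)))
            (Submodule.mem_sup_right (Submodule.mem_sup_right h2))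
        have hpz : ∀ p ∈ lbrk B (f^[2*m0] A) (f^[2*m0] A), ∀ z' ∈ Submodule.span F {x} ⊔
            (f^[2*m0] A ⊔ lbrk B (f^[2*m0] A) (f^[2*m0] A)), B p z' ∈
            Submodule.span F {x} ⊔
            (f^[2*m0] A ⊔ lbrk B (f^[2*m0] A) (f^[2*m0] A)) := by
          intro p hp z' hz'
          rcases Submodule.mem_sup.1 hz' with ⟨y1, hy1, w, hw, rfl⟩
          rcases Submodule.mem_span_singleton.1 hy1 with ⟨c, rfl⟩
          rcases Submodule.mem_sup.1 hw with ⟨u', hu', p', hp', rfl⟩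
          have e : B p (c • x + (u' + p')) = c • B p x + (B p u' + B p p') := by
            simp only [map_add, map_smul]
          rw [e]
          have h1 : B p x ∈ lbrk B (f^[2*m0] A) (f^[2*m0] A) := by
            rw [hsk p x]
            exact Submodule.neg_mem _ (hMPp x hxM p hp)
          have h2 : B p u' = 0 := hNA1 p (hPN hp) u' hu'
          have h3 : B p p' = 0 := hNP p (hPN hp) p' hp'
          rw [h2, h3, add_zero, add_zero]
          exact Submodule.mem_sup_right (Submodule.mem_sup_right (Submodule.smul_mem _ c h1))
        -- now decompose y
        have hycomap : Submodule.span F {x} ⊔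
            (f^[2*m0] A ⊔ lbrk B (f^[2*m0] A) (f^[2*m0] A)) ≤
            Submodule.comap (B.flip z) (Submodule.span F {x} ⊔
              (f^[2*m0] A ⊔ lbrk B (f^[2*m0] A) (f^[2*m0] A))) := by
          refine sup_le ?_ (sup_le ?_ ?_)
          · rw [Submodule.span_singleton_le_iff_mem]
            exact Submodule.mem_comap.2 (by rw [LinearMap.flip_apply]; exact hxz z hz)
          · intro u hu
            exact Submodule.mem_comap.2 (by rw [LinearMap.flip_apply]; exact huz u hu z hz)
          · intro p hp
            exact Submodule.mem_comap.2 (by rw [LinearMap.flip_apply]; exact hpz p hp z hz)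
        have := hycomap hy
        rw [Submodule.mem_comap, LinearMap.flip_apply] at this
        exact this
      obtain ⟨k, hk⟩ := hproper _ hSxsub (hex x hxM)
      refine ⟨k, fun u hu => ?_⟩
      have hiter : ∀ j, ∀ u ∈ f^[2*m0] A, (fun a => B x a)^[j] u ∈
          leibLCSIn B (Submodule.span F {x} ⊔
            (f^[2*m0] A ⊔ lbrk B (f^[2*m0] A) (f^[2*m0] A))) j := by
        intro j; induction j with
        | zero =>
          intro u hu
          exact Submodule.mem_sup_right (Submodule.mem_sup_left hu)
        | succ j ih =>
          intro u hu
          rw [Function.iterate_succ_apply']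
          have hdef : leibLCSIn B (Submodule.span F {x} ⊔
              (f^[2*m0] A ⊔ lbrk B (f^[2*m0] A) (f^[2*m0] A))) (j+1) =
              lbrk B (Submodule.span F {x} ⊔
                (f^[2*m0] A ⊔ lbrk B (f^[2*m0] A) (f^[2*m0] A)))
                (leibLCSIn B (Submodule.span F {x} ⊔
                  (f^[2*m0] A ⊔ lbrk B (f^[2*m0] A) (f^[2*m0] A))) j) := rfl
          rw [hdef]
          exact mem_lbrk B (Submodule.mem_sup_left (Submodule.mem_span_singleton_self x))
            (ih u hu)
      have h5 := hiter k u hu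
      rw [hk] at h5
      exact (Submodule.mem_bot F).1 h5
    -- Engel via mathlib
    letI instLR : LieRing L :=
      { (inferInstance : AddCommGroup L) with
        bracket := fun a b => B a b
        add_lie := fun a b c => by simp only [map_add, LinearMap.add_apply]
        lie_add := fun a b c => by simp only [map_add]
        lie_self := hLie
        leibniz_lie := fun a b c => hB a b c }
    letI instLA : LieAlgebra F L :=
      { (inferInstance : Module F L) with
        lie_smul := fun c a b => by
          show B a (c • b) = c • B a b
          simp only [map_smul] }
    let MS : LieSubalgebra F L := ⟨M, fun {a b} ha hb => hMsub a ha b hb⟩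
    letI instRM : LieRingModule MS ↥(f^[2*m0] A) :=
      { bracket := fun m v => ⟨B m.1 v.1, hMA1p m.1 m.2 v.1 v.2⟩
        add_lie := fun m m' v => Subtype.ext (by
          show B (m.1 + m'.1) v.1 = B m.1 v.1 + B m'.1 v.1
          simp only [map_add, LinearMap.add_apply])
        lie_add := fun m v v' => Subtype.ext (by
          show B m.1 (v.1 + v'.1) = B m.1 v.1 + B m.1 v'.1
          simp only [map_add])
        leibniz_lie := fun m m' v => Subtype.ext (by
          show B (m : L) (B (m' : L) (v : L)) =
            B ((⁅m, m'⁆ : MS) : L) (v : L) + B (m' : L) (B (m : L) (v : L))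
          have hcoe : ((⁅m, m'⁆ : MS) : L) = B (m : L) (m' : L) := rfl
          rw [hcoe]
          exact hB _ _ _) }
    letI instLM : LieModule F MS ↥(f^[2*m0] A) :=
      { smul_lie := fun c m v => Subtype.ext (by
          show B (c • m.1) v.1 = c • B m.1 v.1
          simp only [map_smul, LinearMap.smul_apply])
        lie_smul := fun c m v => Subtype.ext (by
          show B m.1 (c • v.1) = c • B m.1 v.1
          simp only [map_smul]) }
    haveI : IsNoetherian F ↥(f^[2*m0] A) := inferInstance
    have hnilp : ∀ x : MS, IsNilpotent (LieModule.toEnd F MS ↥(f^[2*m0] A) x) := by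
      intro x
      obtain ⟨k, hk⟩ := hTx x.1 x.2
      have key : ∀ (n : ℕ) (v : ↥(f^[2*m0] A)),
          (((LieModule.toEnd F MS ↥(f^[2*m0] A) x) ^ n) v : L) = (fun a => B x.1 a)^[n] v.1 := by
        intro n; induction n with
        | zero => intro v; simp
        | succ n ih =>
          intro v
          rw [pow_succ, Module.End.mul_apply, Function.iterate_succ_apply]
          have h1 : ((LieModule.toEnd F MS ↥(f^[2*m0] A) x) v : L) = B x.1 v.1 := rfl
          rw [ih ((LieModule.toEnd F MS ↥(f^[2*m0] A) x) v), h1]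
      refine ⟨k, ?_⟩
      ext v
      have h2 := key k v
      rw [hk v.1 v.2] at h2
      simp only [LinearMap.zero_apply]
      rw [h2]
      rfl
    haveI hNilp : LieModule.IsNilpotent MS ↥(f^[2*m0] A) :=
      (LieModule.isNilpotent_iff_forall' (R := F)).2 hnilp
    obtain ⟨j, hj⟩ := LieModule.IsNilpotent.nilpotent F MS ↥(f^[2*m0] A)
    -- transfer lower central series back
    have htrans : ∀ n : ℕ, f^[n] (f^[2*m0] A) ≤
        Submodule.map (f^[2*m0] A).subtype
          (LieSubmodule.toSubmodule (LieModule.lowerCentralSeries F MS ↥(f^[2*m0] A) n)) := by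
      intro n; induction n with
      | zero =>
        simp only [Function.iterate_zero, id_eq, LieModule.lowerCentralSeries_zero,
          LieSubmodule.top_toSubmodule, Submodule.map_subtype_top]
        exact le_rfl
      | succ n ih =>
        rw [Function.iterate_succ_apply']
        refine lbrk_le B ?_
        intro m hm u hu
        rcases Submodule.mem_map.1 (ih hu) with ⟨uu, huu, rfl⟩
        refine Submodule.mem_map.2 ⟨⁅(⟨m, hm⟩ : MS), uu⁆, ?_, rfl⟩
        rw [LieSubmodule.mem_toSubmodule] at huu ⊢
        rw [LieModule.lowerCentralSeries_succ]
        exact LieSubmodule.lie_mem_lie (LieSubmodule.mem_top _) huu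
    have hA1bot : f^[j] (f^[2*m0] A) ≤ ⊥ := by
      have h1 := htrans j
      rw [hj] at h1
      simpa using h1
    have hAeqN : A = N := by
      have h1 := hAU (j + 2*m0)
      rw [Function.iterate_add_apply] at h1
      rw [le_bot_iff.1 hA1bot, sup_bot_eq] at h1
      exact h1
    exact absurd hAeqN.symm hNA.ne
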